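/- Let R be a simple finitely generated unital associative F-algebra with center Z. If R is finite-dimensional as a module over Z, then R is finite-dimensional as a vector space over F. -/

import Mathlib

/-- If a simple finitely generated unital `F`-algebra `R` is finite-dimensional over its
center `Z`, then `R` is finite-dimensional over `F`. -/
theorem simple_fg_finite_over_center_finite_over_base
    (F : Type*) [Field F] (hchar : (2 : F) ≠ 0)
    (R : Type*) [Ring R] [Algebra F R] [IsSimpleRing R]
    (hfg : ∃ s : Finset R, Algebra.adjoin F (s : Set R) = ⊤)
    (hZ : Module.Finite (Subring.center R) R) :
    FiniteDimensional F R := by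
  classical
  set Z := Subring.center R with hZdef
  letI : Algebra F Z :=
    ((algebraMap F R).codRestrict Z
      (fun r => Subring.mem_center_iff.mpr fun g => (Algebra.commutes r g).symm)).toAlgebra
  haveI : IsScalarTower F Z R := IsScalarTower.of_algebraMap_eq fun r => rfl
  obtain ⟨s, hs⟩ := hfg
  have hAC : (⊤ : Subalgebra F R).FG := ⟨s, hs⟩
  have hBC : (⊤ : Submodule Z R).FG := hZ.fg_top
  obtain ⟨B₀, hB₀fg, hB₀C⟩ := exists_subalgebra_of_fg F Z R hAC hBC
  haveI : IsNoetherianRing B₀ := isNoetherianRing_of_fg hB₀fg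
  haveI : Module.Finite B₀ R := ⟨hB₀C⟩
  have hZfgAlg : (⊤ : Subalgebra F Z).FG :=
    Algebra.fg_trans' (B₀.fg_top.2 hB₀fg)
      (Subalgebra.fg_of_submodule_fg
        (fg_of_injective (IsScalarTower.toAlgHom B₀ Z R).toLinearMap Subtype.coe_injective))
  haveI : Algebra.FiniteType F Z := ⟨hZfgAlg⟩
  letI : Field Z := (IsSimpleRing.isField_center R).toField
  haveI : Module.Finite F Z := finite_of_finite_type_of_isJacobsonRing F Z
  haveI : Module.Finite Z R := hZ
  exact Module.Finite.trans Z R
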